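/- Let X, Y be real-valued random variables with E X = E Y, whose distribution functions F_X, F_Y cross exactly once: there exists x₀ ∈ ℝ with F_X(x) ≤ F_Y(x) for x < x₀ and F_X(x) ≥ F_Y(x) for x > x₀. Then E f(X) ≤ E f(Y) for every convex function f : ℝ → ℝ for which both expectations exist. -/

import Mathlib

open MeasureTheory Set



-- subgradient existence
lemma ohlin_exists_subgradient {f : ℝ → ℝ} (hf : ConvexOn ℝ Set.univ f) (x₀ : ℝ) :
    ∃ c : ℝ, ∀ x, f x₀ + c * (x - x₀) ≤ f x := by
  set S : Set ℝ := (fun y => (f y - f x₀) / (y - x₀)) '' Ioi x₀ with hS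
  have hne : S.Nonempty := ⟨_, ⟨x₀ + 1, by simp, rfl⟩⟩
  have hlb : ∀ z ∈ S, f x₀ - f (x₀ - 1) ≤ z := by
    rintro z ⟨y, hy, rfl⟩
    have := hf.slope_mono_adjacent (x := x₀ - 1) (y := x₀) (z := y)
      (mem_univ _) (mem_univ _) (by linarith) hy
    rw [show x₀ - (x₀ - 1) = 1 by ring, div_one] at this
    exact this
  have hbdd : BddBelow S := ⟨_, hlb⟩
  refine ⟨sInf S, fun x => ?_⟩
  rcases lt_trichotomy x x₀ with hx | rfl | hx
  · have key : (f x₀ - f x) / (x₀ - x) ≤ sInf S := by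
      apply le_csInf hne
      rintro z ⟨y, hy, rfl⟩
      exact hf.slope_mono_adjacent (mem_univ _) (mem_univ _) hx hy
    have h1 : (0:ℝ) < x₀ - x := by linarith
    have := (div_le_iff₀ h1).mp key
    nlinarith
  · simp
  · have key : sInf S ≤ (f x - f x₀) / (x - x₀) := csInf_le hbdd ⟨x, hx, rfl⟩
    have h1 : (0:ℝ) < x - x₀ := by linarith
    have := (le_div_iff₀ h1).mp key
    nlinarith



lemma ohlin_crossA {Ω : Type*} [MeasurableSpace Ω] (μ : Measure Ω) [IsProbabilityMeasure μ]
    {X Y : Ω → ℝ} {x₀ : ℝ}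
    (h : ∀ x < x₀, μ {ω | X ω < x} ≤ μ {ω | Y ω < x}) :
    ∀ a ≤ x₀, μ {ω | X ω < a} ≤ μ {ω | Y ω < a} := by
  intro a ha
  rcases ha.lt_or_eq with ha | rfl
  · exact h a ha
  · have hU : ∀ Z : Ω → ℝ, {ω | Z ω < a} = ⋃ n : ℕ, {ω | Z ω < a - 1 / (n + 1)} := by
      intro Z
      ext ω
      simp only [mem_setOf_eq, mem_iUnion]
      constructor
      · intro hω
        obtain ⟨n, hn⟩ := exists_nat_one_div_lt (ε := a - Z ω) (by linarith)
        exact ⟨n, by linarith⟩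
      · rintro ⟨n, hn⟩
        have : (0:ℝ) < 1 / ((n:ℝ) + 1) := by positivity
        linarith
    have hmono : ∀ Z : Ω → ℝ, Monotone (fun n : ℕ => {ω | Z ω < a - 1 / (n + 1)}) := by
      intro Z n m hnm ω hω
      simp only [mem_setOf_eq] at *
      have h1 : 1 / ((m:ℝ) + 1) ≤ 1 / ((n:ℝ) + 1) := by
        apply one_div_le_one_div_of_le (by positivity)
        exact_mod_cast by omega
      linarith
    rw [hU X, hU Y, (hmono X).measure_iUnion, (hmono Y).measure_iUnion]
    apply iSup_mono
    intro n
    apply h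
    have : (0:ℝ) < 1 / ((n:ℝ) + 1) := by positivity
    linarith

lemma ohlin_crossB {Ω : Type*} [MeasurableSpace Ω] (μ : Measure Ω) [IsProbabilityMeasure μ]
    {X Y : Ω → ℝ} {x₀ : ℝ} (hXm : Measurable X) (hYm : Measurable Y)
    (h : ∀ x > x₀, μ {ω | Y ω < x} ≤ μ {ω | X ω < x}) :
    ∀ b ≥ x₀, μ {ω | b < X ω} ≤ μ {ω | b < Y ω} := by
  intro b hb
  have hI : ∀ (Z : Ω → ℝ), {ω | Z ω ≤ b} = ⋂ n : ℕ, {ω | Z ω < b + 1 / (n + 1)} := by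
    intro Z
    ext ω
    simp only [mem_setOf_eq, mem_iInter]
    constructor
    · intro hω n
      have : (0:ℝ) < 1 / ((n:ℝ) + 1) := by positivity
      linarith
    · intro hω
      by_contra hcon
      push_neg at hcon
      obtain ⟨n, hn⟩ := exists_nat_one_div_lt (ε := Z ω - b) (by linarith)
      have := hω n
      push_cast at hn this
      linarith
  have hanti : ∀ Z : Ω → ℝ, Antitone (fun n : ℕ => {ω | Z ω < b + 1 / (n + 1)}) := by
    intro Z n m hnm ω hω
    simp only [mem_setOf_eq] at *
    have h1 : 1 / ((m:ℝ) + 1) ≤ 1 / ((n:ℝ) + 1) := by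
      apply one_div_le_one_div_of_le (by positivity)
      exact_mod_cast by omega
    linarith
  have key : μ {ω | Y ω ≤ b} ≤ μ {ω | X ω ≤ b} := by
    rw [hI X, hI Y, (hanti X).measure_iInter, (hanti Y).measure_iInter]
    · apply iInf_mono
      intro n
      apply h
      have : (0:ℝ) < 1 / ((n:ℝ) + 1) := by positivity
      linarith
    · exact fun n => (hYm (measurableSet_Iio (a := b + 1 / (n + 1)))).nullMeasurableSet
    · exact ⟨0, measure_ne_top μ _⟩
    · exact fun n => (hXm (measurableSet_Iio (a := b + 1 / (n + 1)))).nullMeasurableSet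
    · exact ⟨0, measure_ne_top μ _⟩
  have hcX : {ω | b < X ω} = {ω | X ω ≤ b}ᶜ := by ext ω; simp [not_le]
  have hcY : {ω | b < Y ω} = {ω | Y ω ≤ b}ᶜ := by ext ω; simp [not_le]
  rw [hcX, hcY]
  rw [show {ω | X ω ≤ b} = X ⁻¹' Iic b from rfl, show {ω | Y ω ≤ b} = Y ⁻¹' Iic b from rfl] at key ⊢
  rw [measure_compl (hXm measurableSet_Iic) (measure_ne_top μ _),
    measure_compl (hYm measurableSet_Iic) (measure_ne_top μ _)]
  exact tsub_le_tsub_left key _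



-- valley monotonicity
lemma ohlin_valley_left {g : ℝ → ℝ} (hg : ConvexOn ℝ Set.univ g) {x₀ : ℝ} (h0 : g x₀ = 0)
    (hnn : ∀ x, 0 ≤ g x) {x y : ℝ} (hxy : x ≤ y) (hy : y ≤ x₀) : g y ≤ g x := by
  have hseg : y ∈ segment ℝ x x₀ := by
    rw [segment_eq_Icc (hxy.trans hy)]; exact ⟨hxy, hy⟩
  have := hg.le_on_segment (mem_univ x) (mem_univ x₀) hseg
  rw [h0] at this
  exact this.trans (max_le le_rfl (hnn x))

lemma ohlin_valley_right {g : ℝ → ℝ} (hg : ConvexOn ℝ Set.univ g) {x₀ : ℝ} (h0 : g x₀ = 0)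
    (hnn : ∀ x, 0 ≤ g x) {x y : ℝ} (hxy : y ≤ x) (hy : x₀ ≤ y) : g y ≤ g x := by
  have hseg : y ∈ segment ℝ x₀ x := by
    rw [segment_eq_Icc (hy.trans hxy)]; exact ⟨hy, hxy⟩
  have := hg.le_on_segment (mem_univ x₀) (mem_univ x) hseg
  rw [h0] at this
  exact this.trans (max_le (hnn x) le_rfl)

-- open bounded-above lower set is Iio of its sSup
lemma ohlin_lower_open {L : Set ℝ} (hopen : IsOpen L) (hne : L.Nonempty) (hbdd : BddAbove L)
    (hlow : ∀ ⦃x y : ℝ⦄, x < y → y ∈ L → x ∈ L) : L = Iio (sSup L) := by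
  ext x
  constructor
  · intro hx
    obtain ⟨ε, hε, hball⟩ := Metric.isOpen_iff.mp hopen x hx
    have hmem : x + ε / 2 ∈ L := hball (by
      simp only [Metric.mem_ball, Real.dist_eq, add_sub_cancel_left,
        abs_of_nonneg (by linarith : (0:ℝ) ≤ ε/2)]; linarith)
    have := le_csSup hbdd hmem
    simp only [mem_Iio]
    linarith
  · intro hx
    obtain ⟨y, hyL, hxy⟩ := exists_lt_of_lt_csSup hne hx
    exact hlow hxy hyL

lemma ohlin_upper_open {R : Set ℝ} (hopen : IsOpen R) (hne : R.Nonempty) (hbdd : BddBelow R)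
    (hupp : ∀ ⦃x y : ℝ⦄, y < x → y ∈ R → x ∈ R) : R = Ioi (sInf R) := by
  ext x
  constructor
  · intro hx
    obtain ⟨ε, hε, hball⟩ := Metric.isOpen_iff.mp hopen x hx
    have hmem : x - ε / 2 ∈ R := hball (by
      simp only [Metric.mem_ball, Real.dist_eq, sub_sub_cancel_left,
        abs_neg, abs_of_nonneg (by linarith : (0:ℝ) ≤ ε/2)]; linarith)
    have := csInf_le hbdd hmem
    simp only [mem_Ioi]
    linarith
  · intro hx
    obtain ⟨y, hyR, hxy⟩ := exists_lt_of_csInf_lt hne hx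
    exact hupp hxy hyR

lemma ohlin_superlevel {Ω : Type*} [MeasurableSpace Ω] (μ : Measure Ω) [IsProbabilityMeasure μ]
    {X Y : Ω → ℝ} (hXm : Measurable X) (hYm : Measurable Y) {x₀ : ℝ}
    (hA : ∀ a ≤ x₀, μ {ω | X ω < a} ≤ μ {ω | Y ω < a})
    (hB : ∀ b ≥ x₀, μ {ω | b < X ω} ≤ μ {ω | b < Y ω})
    {g : ℝ → ℝ} (hg : ConvexOn ℝ Set.univ g) (hgc : Continuous g)
    (h0 : g x₀ = 0) (hnn : ∀ x, 0 ≤ g x) {s : ℝ} (hs : 0 ≤ s) :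
    μ {ω | s < g (X ω)} ≤ μ {ω | s < g (Y ω)} := by
  set L := Iio x₀ ∩ {x | s < g x} with hLdef
  set R := Ioi x₀ ∩ {x | s < g x} with hRdef
  have hLopen : IsOpen L := isOpen_Iio.inter (isOpen_lt continuous_const hgc)
  have hRopen : IsOpen R := isOpen_Ioi.inter (isOpen_lt continuous_const hgc)
  have hsplit : {x : ℝ | s < g x} = L ∪ R := by
    ext x
    constructor
    · intro hx
      rcases lt_trichotomy x x₀ with h | rfl | h
      · exact Or.inl ⟨h, hx⟩
      · exact absurd hx (by simp only [mem_setOf_eq, h0, not_lt]; exact hs)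
      · exact Or.inr ⟨h, hx⟩
    · rintro (⟨_, hx⟩ | ⟨_, hx⟩) <;> exact hx
  have hXL : μ (X ⁻¹' L) ≤ μ (Y ⁻¹' L) := by
    rcases L.eq_empty_or_nonempty with h | h
    · simp [h]
    · have hbdd : BddAbove L := ⟨x₀, fun x hx => hx.1.le⟩
      have hlow : ∀ ⦃x y : ℝ⦄, x < y → y ∈ L → x ∈ L := by
        rintro x y hxy ⟨hy1, hy2⟩
        exact ⟨hxy.trans hy1, lt_of_lt_of_le hy2 (ohlin_valley_left hg h0 hnn hxy.le hy1.le)⟩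
      rw [ohlin_lower_open hLopen h hbdd hlow]
      exact hA _ (csSup_le h fun x hx => hx.1.le)
  have hXR : μ (X ⁻¹' R) ≤ μ (Y ⁻¹' R) := by
    rcases R.eq_empty_or_nonempty with h | h
    · simp [h]
    · have hbdd : BddBelow R := ⟨x₀, fun x hx => hx.1.le⟩
      have hupp : ∀ ⦃x y : ℝ⦄, y < x → y ∈ R → x ∈ R := by
        rintro x y hxy ⟨hy1, hy2⟩
        exact ⟨hy1.trans hxy, lt_of_lt_of_le hy2 (ohlin_valley_right hg h0 hnn hxy.le hy1.le)⟩
      rw [ohlin_upper_open hRopen h hbdd hupp]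
      exact hB _ (le_csInf h fun x hx => hx.1.le)
  have hdisj : Disjoint L R :=
    ((Iio_disjoint_Ici le_rfl).mono_right Ioi_subset_Ici_self).mono inter_subset_left inter_subset_left
  have hmeas : ∀ Z : Ω → ℝ, Measurable Z →
      μ {ω | s < g (Z ω)} = μ (Z ⁻¹' L) + μ (Z ⁻¹' R) := by
    intro Z hZ
    rw [show {ω | s < g (Z ω)} = Z ⁻¹' {x | s < g x} from rfl, hsplit, preimage_union]
    exact measure_union (hdisj.preimage Z) (hZ hRopen.measurableSet)
  rw [hmeas X hXm, hmeas Y hYm]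
  exact add_le_add hXL hXR
theorem ohlin_lemma {Ω : Type*} [MeasurableSpace Ω]
    (μ : Measure Ω) [IsProbabilityMeasure μ] (X Y : Ω → ℝ)
    (hXm : Measurable X) (hYm : Measurable Y)
    (hXi : Integrable X μ) (hYi : Integrable Y μ)
    (hmean : ∫ ω, X ω ∂μ = ∫ ω, Y ω ∂μ)
    (x₀ : ℝ)
    (hcross₁ : ∀ x < x₀, μ {ω | X ω < x} ≤ μ {ω | Y ω < x})
    (hcross₂ : ∀ x > x₀, μ {ω | Y ω < x} ≤ μ {ω | X ω < x})
    (f : ℝ → ℝ) (hf : ConvexOn ℝ Set.univ f)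
    (hfX : Integrable (fun ω => f (X ω)) μ) (hfY : Integrable (fun ω => f (Y ω)) μ) :
    ∫ ω, f (X ω) ∂μ ≤ ∫ ω, f (Y ω) ∂μ := by
  obtain ⟨c, hc⟩ := ohlin_exists_subgradient hf x₀
  set g : ℝ → ℝ := fun x => f x - f x₀ - c * (x - x₀) with hgdef
  have hfc : Continuous f := hf.locallyLipschitz.continuous
  have hgc : Continuous g :=
    (hfc.sub continuous_const).sub (continuous_const.mul (continuous_id.sub continuous_const))
  have hgconv : ConvexOn ℝ Set.univ g := by
    have haff : ConvexOn ℝ Set.univ (fun x : ℝ => -(f x₀) - c * (x - x₀)) := by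
      refine ⟨convex_univ, ?_⟩
      intro x _ y _ a b ha hb hab
      simp only [smul_eq_mul]
      have hb' : b = 1 - a := by linarith
      subst hb'
      have : -f x₀ - c * (a * x + (1 - a) * y - x₀) =
          a * (-f x₀ - c * (x - x₀)) + (1 - a) * (-f x₀ - c * (y - x₀)) := by ring
      exact le_of_eq this
    have h := hf.add haff
    suffices hg : g = f + fun x => -f x₀ - c * (x - x₀) by rw [hg]; exact h
    funext x
    simp only [hgdef, Pi.add_apply]
    ring
  have h0 : g x₀ = 0 := by simp [hgdef]
  have hnn : ∀ x, 0 ≤ g x := by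
    intro x
    have := hc x
    simp only [hgdef]
    linarith
  have hgXi : Integrable (fun ω => g (X ω)) μ :=
    (hfX.sub (integrable_const _)).sub ((hXi.sub (integrable_const x₀)).const_mul c)
  have hgYi : Integrable (fun ω => g (Y ω)) μ :=
    (hfY.sub (integrable_const _)).sub ((hYi.sub (integrable_const x₀)).const_mul c)
  have hnnX : 0 ≤ᵐ[μ] fun ω => g (X ω) := Filter.Eventually.of_forall fun ω => hnn _
  have hnnY : 0 ≤ᵐ[μ] fun ω => g (Y ω) := Filter.Eventually.of_forall fun ω => hnn _
  have hlin : ∫⁻ ω, ENNReal.ofReal (g (X ω)) ∂μ ≤ ∫⁻ ω, ENNReal.ofReal (g (Y ω)) ∂μ := by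
    rw [lintegral_eq_lintegral_meas_lt μ hnnX (hgc.measurable.comp hXm).aemeasurable,
        lintegral_eq_lintegral_meas_lt μ hnnY (hgc.measurable.comp hYm).aemeasurable]
    refine lintegral_mono fun t => ?_
    rcases le_or_gt 0 t with ht | ht
    · exact ohlin_superlevel μ hXm hYm (ohlin_crossA μ hcross₁)
        (ohlin_crossB μ hXm hYm hcross₂) hgconv hgc h0 hnn ht
    · have hU : ∀ Z : Ω → ℝ, {ω | t < g (Z ω)} = Set.univ :=
        fun Z => eq_univ_of_forall fun ω => lt_of_lt_of_le ht (hnn _)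
      rw [hU X, hU Y]
  have hkey : ∫ ω, g (X ω) ∂μ ≤ ∫ ω, g (Y ω) ∂μ := by
    rw [integral_eq_lintegral_of_nonneg_ae hnnX
        (hgc.measurable.comp hXm).aestronglyMeasurable,
      integral_eq_lintegral_of_nonneg_ae hnnY
        (hgc.measurable.comp hYm).aestronglyMeasurable]
    exact ENNReal.toReal_mono hgYi.lintegral_lt_top.ne hlin
  have hexp : ∀ (Z : Ω → ℝ), Integrable Z μ → Integrable (fun ω => f (Z ω)) μ →
      ∫ ω, g (Z ω) ∂μ = ∫ ω, f (Z ω) ∂μ - f x₀ - c * (∫ ω, Z ω ∂μ - x₀) := by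
    intro Z hZi hfZ
    simp only [hgdef]
    have i1 : Integrable (fun ω => f (Z ω) - f x₀) μ := hfZ.sub (integrable_const _)
    have i2 : Integrable (fun ω => c * (Z ω - x₀)) μ := (hZi.sub (integrable_const x₀)).const_mul c
    rw [integral_sub i1 i2, integral_sub hfZ (integrable_const _), integral_const_mul,
      integral_sub hZi (integrable_const _), integral_const]
    simp [measure_univ]
  rw [hexp X hXi hfX, hexp Y hYi hfY, hmean] at hkey
  linarith
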